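/- Let C ≥ 1 be an integer, λ > 0 a real number, p a probability vector on Fin C, and s a positive probability vector on Fin C. Then (H(p, s) + λ * H(U, s)) − (H(p, p_λ) + λ * H(U, p_λ)) = (1 + λ) * KL(p_λ ‖ s). That is, the excess of the combined cross-entropy and confidence objective at s over its minimum value equals (1 + λ) times the KL divergence of p_λ from s. -/

import Mathlib

/-- `p` is a probability vector on `Fin C`. -/
def IsProbVec {C : ℕ} (p : Fin C → ℝ) : Prop :=
  (∀ i, 0 ≤ p i) ∧ ∑ i, p i = 1

/-- `p` is a positive probability vector on `Fin C`. -/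
def IsPosProbVec {C : ℕ} (p : Fin C → ℝ) : Prop :=
  (∀ i, 0 < p i) ∧ ∑ i, p i = 1

/-- The uniform probability vector on `Fin C`. -/
noncomputable def unif (C : ℕ) : Fin C → ℝ := fun _ => 1 / (C : ℝ)

/-- The smoothed vector `p_λ`, `p_λ i = (p i + λ/C)/(1 + λ)`. -/
noncomputable def smooth {C : ℕ} (lam : ℝ) (p : Fin C → ℝ) : Fin C → ℝ :=
  fun i => (p i + lam / (C : ℝ)) / (1 + lam)

/-- Cross-entropy `H(a, b) = −∑ i, a i * log (b i)`. -/
noncomputable def crossEnt {C : ℕ} (a b : Fin C → ℝ) : ℝ :=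
  -∑ i, a i * Real.log (b i)

/-- KL divergence `KL(a ‖ b) = ∑ i, a i * log (a i / b i)`; terms with
`a i = 0` contribute `0` (which holds since `0 * log (0 / b i) = 0`). -/
noncomputable def KLdiv {C : ℕ} (a b : Fin C → ℝ) : ℝ :=
  ∑ i, a i * Real.log (a i / b i)

/-- The excess of the combined cross-entropy objective at `s` over its
minimum value equals `(1 + λ)` times the KL divergence of `p_λ` from `s`. -/
theorem combined_objective_excess_eq_KL
    (C : ℕ) (hC : 1 ≤ C) (lam : ℝ) (hlam : 0 < lam)
    (p : Fin C → ℝ) (hp : IsProbVec p)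
    (s : Fin C → ℝ) (hs : IsPosProbVec s) :
    (crossEnt p s + lam * crossEnt (unif C) s) -
        (crossEnt p (smooth lam p) + lam * crossEnt (unif C) (smooth lam p)) =
      (1 + lam) * KLdiv (smooth lam p) s := by
  obtain ⟨hp0, hp1⟩ := hp
  obtain ⟨hs0, hs1⟩ := hs
  have hC0 : (0:ℝ) < C := by exact_mod_cast hC
  have h1lam : (0:ℝ) < 1 + lam := by linarith
  have hq : ∀ i, 0 < smooth lam p i := by
    intro i
    have := hp0 i
    have : 0 < p i + lam / C := by positivity
    exact div_pos this h1lam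
  simp only [crossEnt, KLdiv, unif, Finset.mul_sum, ← Finset.sum_neg_distrib,
    ← Finset.sum_add_distrib, ← Finset.sum_sub_distrib]
  apply Finset.sum_congr rfl
  intro i _
  have hlog : Real.log (smooth lam p i / s i) = Real.log (smooth lam p i) - Real.log (s i) :=
    Real.log_div (ne_of_gt (hq i)) (ne_of_gt (hs0 i))
  have hkey : p i + lam * (1 / C) = (1 + lam) * smooth lam p i := by
    simp only [smooth]; field_simp
  rw [hlog]
  linear_combination hkey * (Real.log (smooth lam p i) - Real.log (s i))
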